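/- Let X_1, X_2, ... be an i.i.d. sequence of real-valued random variables with common distribution function F, and let F_n denote the empirical distribution function of the first n observations. Fix p ∈ (0,1) and suppose lq_F(p) < rq_F(p). Then almost surely, for every ε > 0 there exists N such that for all n > N, both lq_{F_n}(p) and rq_{F_n}(p) lie in the set (lq_F(p) − ε, lq_F(p)] ∪ [rq_F(p), rq_F(p) + ε). -/

import Mathlib

open MeasureTheory ProbabilityTheory Filter
open Topology

/-- Left quantile of a distribution function `F` at level `p`:
`lq F p = inf {x | F x ≥ p}`. -/
noncomputable def lq (F : ℝ → ℝ) (p : ℝ) : ℝ := sInf {x : ℝ | p ≤ F x}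

/-- Right quantile of a distribution function `F` at level `p`:
`rq F p = inf {x | F x > p}`. -/
noncomputable def rq (F : ℝ → ℝ) (p : ℝ) : ℝ := sInf {x : ℝ | p < F x}

/-- Empirical distribution function of the first `n` observations `X 0, ..., X (n-1)`:
`edf X n ω x = (1/n) * #{i < n | X i ω ≤ x}`. -/
noncomputable def edf {Ω : Type*} (X : ℕ → Ω → ℝ) (n : ℕ) (ω : Ω) (x : ℝ) : ℝ :=
  ((Finset.range n).filter (fun i => X i ω ≤ x)).card / n

lemma edf_mono {Ω : Type*} (X : ℕ → Ω → ℝ) (n : ℕ) (ω : Ω) : Monotone (edf X n ω) := by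
  intro x y hxy
  unfold edf
  rw [div_eq_mul_inv, div_eq_mul_inv]
  refine mul_le_mul_of_nonneg_right ?_ (by positivity)
  have h : ((Finset.range n).filter (fun i => X i ω ≤ x)).card
      ≤ ((Finset.range n).filter (fun i => X i ω ≤ y)).card :=
    Finset.card_le_card (Finset.monotone_filter_right _ (fun i _ h => le_trans h hxy))
  exact_mod_cast h

lemma edf_eq_sum {Ω : Type*} (X : ℕ → Ω → ℝ) (n : ℕ) (ω : Ω) (x : ℝ) :
    edf X n ω x = (∑ i ∈ Finset.range n,
      (Set.Iic x).indicator (fun _ => (1 : ℝ)) (X i ω)) / n := by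
  unfold edf
  congr 1
  rw [Finset.card_filter]
  push_cast
  refine Finset.sum_congr rfl fun i _ => ?_
  by_cases h : X i ω ≤ x <;> simp [Set.indicator_apply, h]

lemma edf_tendsto {Ω : Type*} [MeasurableSpace Ω] (μ : Measure Ω) [IsProbabilityMeasure μ]
    (X : ℕ → Ω → ℝ) (hmeas : ∀ i, Measurable (X i))
    (hindep : iIndepFun (m := fun _ => Real.measurableSpace) X μ)
    (hident : ∀ i, IdentDistrib (X i) (X 0) μ μ) (x : ℝ) :
    ∀ᵐ ω ∂μ, Tendsto (fun n => edf X n ω x) atTop (𝓝 ((μ {ω | X 0 ω ≤ x}).toReal)) := by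
  set g : ℝ → ℝ := (Set.Iic x).indicator (fun _ => (1 : ℝ)) with hg_def
  have hg : Measurable g := (measurable_const (a := (1:ℝ))).indicator measurableSet_Iic
  have hY0 : (fun ω => g (X (0:ℕ) ω)) = (X 0 ⁻¹' Set.Iic x).indicator (fun _ => (1:ℝ)) := by
    funext ω
    by_cases h : X 0 ω ≤ x <;>
      simp [hg_def, Set.indicator_apply, Set.mem_preimage, Set.mem_Iic, h]
  have hint : Integrable (fun ω => g (X (0:ℕ) ω)) μ := by
    rw [hY0]
    exact (integrable_const (1:ℝ)).indicator ((hmeas 0) measurableSet_Iic)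
  have hindep' : Pairwise (Function.onFun (IndepFun · · μ) fun i => fun ω => g (X i ω)) :=
    fun i j hij => (hindep.indepFun hij).comp hg hg
  have hident' : ∀ i, IdentDistrib (fun ω => g (X i ω)) (fun ω => g (X (0:ℕ) ω)) μ μ :=
    fun i => (hident i).comp hg
  have hexp : μ[fun ω => g (X (0:ℕ) ω)] = (μ {ω | X 0 ω ≤ x}).toReal := by
    rw [hY0]
    have : (X 0 ⁻¹' Set.Iic x).indicator (fun _ => (1:ℝ))
        = (X 0 ⁻¹' Set.Iic x).indicator (1 : Ω → ℝ) := rfl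
    rw [this, integral_indicator_one ((hmeas 0) measurableSet_Iic)]
    rfl
  have := strong_law_ae_real (fun i => fun ω => g (X i ω)) hint hindep' hident'
  rw [hexp] at this
  filter_upwards [this] with ω hω
  have : (fun n => edf X n ω x)
      = fun n : ℕ => (∑ i ∈ Finset.range n, g (X i ω)) / n := by
    funext n; exact edf_eq_sum X n ω x
  rw [this]
  exact hω

/-- If `lq F p < rq F p`, then almost surely, for every `ε > 0`, eventually both
sample quantiles lie in `(lq F p - ε, lq F p] ∪ [rq F p, rq F p + ε)`. -/
theorem sample_quantiles_eventually_near_lq_or_rq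
    {Ω : Type*} [MeasurableSpace Ω] (μ : Measure Ω) [IsProbabilityMeasure μ]
    (X : ℕ → Ω → ℝ) (hmeas : ∀ i, Measurable (X i))
    (hindep : iIndepFun (m := fun _ => Real.measurableSpace) X μ)
    (hident : ∀ i, IdentDistrib (X i) (X 0) μ μ)
    (F : ℝ → ℝ) (hF : ∀ x, F x = (μ {ω | X 0 ω ≤ x}).toReal)
    (p : ℝ) (hp : p ∈ Set.Ioo (0 : ℝ) 1)
    (hlt : lq F p < rq F p) :
    ∀ᵐ ω ∂μ, ∀ ε > (0 : ℝ), ∃ N : ℕ, ∀ n > N,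
      lq (edf X n ω) p ∈
        Set.Ioc (lq F p - ε) (lq F p) ∪ Set.Ico (rq F p) (rq F p + ε) ∧
      rq (edf X n ω) p ∈
        Set.Ioc (lq F p - ε) (lq F p) ∪ Set.Ico (rq F p) (rq F p + ε) := by
  obtain ⟨hp0, hp1⟩ := hp
  set a := lq F p with ha_def
  set b := rq F p with hb_def
  set ν : Measure ℝ := μ.map (X 0) with hν_def
  have hνprob : IsProbabilityMeasure ν := Measure.isProbabilityMeasure_map (hmeas 0).aemeasurable
  have hFν : ∀ x, F x = (ν (Set.Iic x)).toReal := by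
    intro x
    rw [hF, hν_def, Measure.map_apply (hmeas 0) measurableSet_Iic]
    rfl
  have hFcdf : F = fun x => cdf ν x := by
    funext x; rw [hFν, cdf_eq_real, measureReal_def]
  have hFmono : Monotone F := by rw [hFcdf]; exact fun x y h => (cdf ν).mono h
  -- basic bounds from p ∈ (0,1)
  obtain ⟨x₀, hx₀⟩ : ∃ x₀, F x₀ < p := by
    have := (tendsto_cdf_atBot ν).eventually_lt_const hp0
    obtain ⟨x₀, hx₀⟩ := this.exists
    exact ⟨x₀, by rw [hFcdf]; exact hx₀⟩
  obtain ⟨x₁, hx₁⟩ : ∃ x₁, p < F x₁ := by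
    have := (tendsto_cdf_atTop ν).eventually_const_lt hp1
    obtain ⟨x₁, hx₁⟩ := this.exists
    exact ⟨x₁, by rw [hFcdf]; exact hx₁⟩
  have hSbdd : BddBelow {x : ℝ | p ≤ F x} := by
    refine ⟨x₀, fun y hy => ?_⟩
    by_contra h
    push_neg at h
    exact absurd (le_trans hy (hFmono h.le)) (not_le.mpr hx₀)
  have hTsubS : {x : ℝ | p < F x} ⊆ {x : ℝ | p ≤ F x} := by
    intro x hx
    simp only [Set.mem_setOf_eq] at hx ⊢
    exact le_of_lt hx
  have hTbdd : BddBelow {x : ℝ | p < F x} := hSbdd.mono hTsubS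
  have hSne : Set.Nonempty {x : ℝ | p ≤ F x} := ⟨x₁, by exact le_of_lt hx₁⟩
  have hTne : Set.Nonempty {x : ℝ | p < F x} := ⟨x₁, by exact hx₁⟩
  have hlt_a : ∀ x, x < a → F x < p := by
    intro x hx
    by_contra h
    push_neg at h
    exact absurd (csInf_le hSbdd h) (not_le.mpr hx)
  have hle_b : ∀ x, x < b → F x ≤ p := by
    intro x hx
    by_contra h
    push_neg at h
    exact absurd (csInf_le hTbdd h) (not_le.mpr hx)
  have hgt_b : ∀ x, b < x → p < F x := by
    intro x hx
    obtain ⟨t, ht, htx⟩ := exists_lt_of_csInf_lt hTne hx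
    exact lt_of_lt_of_le ht (hFmono htx.le)
  have hge_a : ∀ x, a < x → p ≤ F x := by
    intro x hx
    obtain ⟨t, ht, htx⟩ := exists_lt_of_csInf_lt hSne hx
    exact le_trans ht (hFmono htx.le)
  have hFa : p ≤ F a := by
    have hcw : ContinuousWithinAt F (Set.Ioi a) a := by
      rw [hFcdf]
      exact ((cdf ν).right_continuous a).mono Set.Ioi_subset_Ici_self
    refine ge_of_tendsto hcw ?_
    filter_upwards [self_mem_nhdsWithin] with y hy
    exact hge_a y hy
  -- the flat interval (a, b) carries no mass
  have hIoo : ν (Set.Ioo a b) = 0 := by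
    have key : ∀ c, c < b → ν (Set.Ioc a c) = 0 := by
      intro c hc
      rcases le_or_gt c a with h | h
      · rw [Set.Ioc_eq_empty (not_lt.mpr h), measure_empty]
      · have h1 : ν (Set.Iic c) ≤ ν (Set.Iic a) := by
          rw [← ENNReal.toReal_le_toReal (measure_ne_top ν _) (measure_ne_top ν _),
            ← hFν, ← hFν]
          exact le_trans (hle_b c hc) hFa
        rw [← Set.Iic_sdiff_Iic,
          measure_diff (Set.Iic_subset_Iic.mpr h.le) measurableSet_Iic.nullMeasurableSet
            (measure_ne_top ν _)]
        exact tsub_eq_zero_of_le h1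
    have cover : Set.Ioo a b ⊆ ⋃ n : ℕ, Set.Ioc a (b - (b - a) / (n + 1)) := by
      intro x hx
      obtain ⟨hxa, hxb⟩ := hx
      obtain ⟨n, hn⟩ := exists_nat_gt ((b - a) / (b - x))
      refine Set.mem_iUnion.2 ⟨n, hxa, ?_⟩
      have hbx : (0:ℝ) < b - x := by linarith
      have hba : (0:ℝ) < b - a := by linarith
      have h1 : b - a < (b - x) * (n + 1) := by
        have := (div_lt_iff₀ hbx).mp (lt_trans hn (lt_add_one _))
        linarith [this]
      have h2 : (b - a) / (n + 1) ≤ b - x := by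
        rw [div_le_iff₀ (by positivity)]
        nlinarith
      linarith
    refine measure_mono_null cover (measure_iUnion_null fun n => key _ ?_)
    have hba : (0:ℝ) < b - a := by linarith
    have : (0:ℝ) < (b - a) / (n + 1) := by positivity
    linarith
  have hgapae : ∀ᵐ ω ∂μ, ∀ i, X i ω ∉ Set.Ioo a b := by
    rw [ae_all_iff]
    intro i
    have h0 : μ (X i ⁻¹' Set.Ioo a b) = 0 := by
      rw [← Measure.map_apply (hmeas i) measurableSet_Ioo, (hident i).map_eq]
      exact hIoo
    rw [ae_iff]
    simpa [Set.preimage] using h0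
  have hconv : ∀ᵐ ω ∂μ, ∀ q : ℚ, Tendsto (fun n => edf X n ω q) atTop (𝓝 (F q)) := by
    rw [ae_all_iff]
    intro q
    have := edf_tendsto μ X hmeas hindep hident q
    rw [← hF] at this
    exact this
  filter_upwards [hconv, hgapae] with ω hωconv hωgap
  intro ε hε
  obtain ⟨r, hr1, hr2⟩ := exists_rat_btwn (show a - ε < a by linarith)
  obtain ⟨s, hs1, hs2⟩ := exists_rat_btwn (show b < b + ε by linarith)
  have hFr : F r < p := hlt_a r hr2
  have hFs : p < F s := hgt_b s hs1
  obtain ⟨N₁, hN₁⟩ := eventually_atTop.mp ((hωconv r).eventually_lt_const hFr)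
  obtain ⟨N₂, hN₂⟩ := eventually_atTop.mp ((hωconv s).eventually_const_lt hFs)
  refine ⟨N₁ + N₂, fun n hn => ?_⟩
  set G := edf X n ω with hG_def
  have hGmono : Monotone G := edf_mono X n ω
  have hGr : G r < p := hN₁ n (le_trans (Nat.le_add_right _ _) hn.le)
  have hGs : p < G s := hN₂ n (le_trans (Nat.le_add_left _ _) hn.le)
  have hSn_lb : ∀ x ∈ {x : ℝ | p ≤ G x}, (r:ℝ) ≤ x := by
    intro x hx
    by_contra h
    push_neg at h
    exact absurd (le_trans hx (hGmono h.le)) (not_le.mpr hGr)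
  have hSnbdd : BddBelow {x : ℝ | p ≤ G x} := ⟨r, hSn_lb⟩
  have hTnsub : {x : ℝ | p < G x} ⊆ {x : ℝ | p ≤ G x} := by
    intro x hx
    simp only [Set.mem_setOf_eq] at hx ⊢
    exact le_of_lt hx
  have hTnbdd : BddBelow {x : ℝ | p < G x} := hSnbdd.mono hTnsub
  have hSnne : Set.Nonempty {x : ℝ | p ≤ G x} := ⟨(s:ℝ), by exact le_of_lt hGs⟩
  have hTnne : Set.Nonempty {x : ℝ | p < G x} := ⟨(s:ℝ), by exact hGs⟩
  have hlq_ge : (r:ℝ) ≤ lq G p := le_csInf hSnne hSn_lb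
  have hrq_le : rq G p ≤ s := csInf_le hTnbdd hGs
  have hlq_le_rq : lq G p ≤ rq G p := csInf_le_csInf hSnbdd hTnne hTnsub
  -- constancy of G on [a, b)
  have hconst : ∀ x, a ≤ x → x < b → G x = G a := by
    intro x hax hxb
    have : (Finset.range n).filter (fun i => X i ω ≤ x)
        = (Finset.range n).filter (fun i => X i ω ≤ a) := by
      refine Finset.filter_congr fun i _ => ?_
      constructor
      · intro h
        by_contra hcon
        push_neg at hcon
        exact hωgap i ⟨hcon, lt_of_le_of_lt h hxb⟩
      · intro h
        exact le_trans h hax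
    rw [hG_def]
    unfold edf
    rw [this]
  -- the gap dichotomy for lq
  have hlq_gap : lq G p ≤ a ∨ b ≤ lq G p := by
    rcases le_or_gt p (G a) with h | h
    · exact Or.inl (csInf_le hSnbdd h)
    · refine Or.inr (le_csInf hSnne fun x hx => ?_)
      by_contra hxb
      push_neg at hxb
      rcases le_or_gt x a with hxa | hxa
      · exact absurd (le_trans hx (hGmono hxa)) (not_le.mpr h)
      · rw [Set.mem_setOf_eq, hconst x hxa.le hxb] at hx
        exact absurd hx (not_le.mpr h)
  have hrq_gap : rq G p ≤ a ∨ b ≤ rq G p := by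
    rcases lt_or_ge p (G a) with h | h
    · exact Or.inl (csInf_le hTnbdd h)
    · refine Or.inr (le_csInf hTnne fun x hx => ?_)
      by_contra hxb
      push_neg at hxb
      rcases le_or_gt x a with hxa | hxa
      · exact absurd (lt_of_lt_of_le hx (hGmono hxa)) (not_lt.mpr h)
      · rw [Set.mem_setOf_eq, hconst x hxa.le hxb] at hx
        exact absurd hx (not_lt.mpr h)
  have hlq_gt : a - ε < lq G p := lt_of_lt_of_le hr1 hlq_ge
  have hrq_lt : rq G p < b + ε := lt_of_le_of_lt hrq_le hs2
  have hlq_lt : lq G p < b + ε := lt_of_le_of_lt hlq_le_rq hrq_lt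
  have hrq_gt : a - ε < rq G p := lt_of_lt_of_le hlq_gt hlq_le_rq
  constructor
  · rcases hlq_gap with h | h
    · exact Or.inl ⟨hlq_gt, h⟩
    · exact Or.inr ⟨h, hlq_lt⟩
  · rcases hrq_gap with h | h
    · exact Or.inl ⟨hrq_gt, h⟩
    · exact Or.inr ⟨h, hrq_lt⟩
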